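/- Fix κ > 0 and k ∈ ℕ. Suppose α* > 2 satisfies F̃_k(α*) = 0 where F̃_k(α) = (κ/α)·I_{k+1}(κ/α)/I_k(κ/α) + α·J_{k+1}(α)/J_k(α). Then F̃_k'(α*) = (2κ²/(α*)³)·(u² + 2ku/z + (α*)²/(2z²) − 1/2) with z = κ/α* and u = I_{k+1}(z)/I_k(z), and this quantity is strictly positive. In particular every root of F̃_k greater than 2 is simple. -/

import Mathlib

open Real Filter Set

/-- Modified Bessel function of the first kind of order `ν`, defined by its power series
(valid for `z > 0`). -/
noncomputable def besselI (ν : ℝ) (z : ℝ) : ℝ :=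
  ∑' m : ℕ, (z / 2) ^ (2 * (m : ℝ) + ν) / ((m.factorial : ℝ) * Real.Gamma ((m : ℝ) + ν + 1))

/-- Bessel function of the first kind of order `ν`, defined by its power series
(valid for `z > 0`). -/
noncomputable def besselJ (ν : ℝ) (z : ℝ) : ℝ :=
  ∑' m : ℕ, (-1 : ℝ) ^ m * (z / 2) ^ (2 * (m : ℝ) + ν) /
    ((m.factorial : ℝ) * Real.Gamma ((m : ℝ) + ν + 1))

/-- The function `F̃_k` from the paper (here `κ > 0`, `k ∈ ℕ`). -/
noncomputable def Ftilde (κ : ℝ) (k : ℕ) (α : ℝ) : ℝ :=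
  (κ / α) * besselI (k + 1) (κ / α) / besselI k (κ / α)
    + α * besselJ (k + 1) α / besselJ k α

namespace BesselAux

/-- term of the series -/
noncomputable def T (ε : ℝ) (n : ℕ) (z : ℝ) (m : ℕ) : ℝ :=
  ε ^ m * ((z / 2) ^ (2 * m + n) / ((m.factorial : ℝ) * ((m + n).factorial : ℝ)))

/-- the series -/
noncomputable def B (ε : ℝ) (n : ℕ) (z : ℝ) : ℝ := ∑' m, T ε n z m

lemma T_norm_le {ε : ℝ} (hε : |ε| ≤ 1) (n : ℕ) (z : ℝ) (m : ℕ) :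
    ‖T ε n z m‖ ≤ (|z| / 2) ^ n * ((|z| / 2) ^ 2) ^ m / m.factorial := by
  have h1 : (1 : ℝ) ≤ ((m + n).factorial : ℝ) := by exact_mod_cast (m + n).factorial_pos
  have hm : (0 : ℝ) < (m.factorial : ℝ) := by exact_mod_cast m.factorial_pos
  have hεm : |ε ^ m| ≤ 1 := by
    rw [abs_pow]; exact pow_le_one₀ (abs_nonneg _) hε
  have habs : ‖T ε n z m‖ ≤ |z / 2| ^ (2 * m + n) / (m.factorial * (m + n).factorial) := by
    rw [T, norm_mul, norm_div]
    have : ‖(z / 2) ^ (2 * m + n)‖ = |z / 2| ^ (2 * m + n) := by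
      rw [norm_pow]; rfl
    rw [this]
    calc ‖ε ^ m‖ * (|z / 2| ^ (2 * m + n) / ‖(m.factorial : ℝ) * ((m + n).factorial : ℝ)‖)
        ≤ 1 * (|z / 2| ^ (2 * m + n) / ‖(m.factorial : ℝ) * ((m + n).factorial : ℝ)‖) := by
          apply mul_le_mul_of_nonneg_right hεm
          positivity
      _ = |z / 2| ^ (2 * m + n) / (m.factorial * (m + n).factorial) := by
          rw [one_mul, norm_mul, Real.norm_natCast, Real.norm_natCast]
  refine habs.trans ?_
  rw [abs_div, abs_two]
  have : |z| / 2 ^ (1:ℕ) = |z| / 2 := by norm_num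
  have hpow : (|z| / 2) ^ (2 * m + n) = (|z| / 2) ^ n * ((|z| / 2) ^ 2) ^ m := by
    rw [← pow_mul, ← pow_add, add_comm]
  rw [hpow]
  rw [div_le_div_iff₀ (by positivity) hm]
  have hnum : (|z| / 2) ^ n * ((|z| / 2) ^ 2) ^ m * (m.factorial : ℝ)
      ≤ (|z| / 2) ^ n * ((|z| / 2) ^ 2) ^ m * ((m.factorial : ℝ) * ((m + n).factorial : ℝ)) := by
    apply mul_le_mul_of_nonneg_left _ (by positivity)
    nlinarith
  linarith

lemma summable_majorant (c : ℝ) : Summable fun m : ℕ => c ^ m / m.factorial :=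
  Real.summable_pow_div_factorial c

lemma summable_norm_T {ε : ℝ} (hε : |ε| ≤ 1) (n : ℕ) (z : ℝ) :
    Summable fun m => ‖T ε n z m‖ := by
  apply Summable.of_nonneg_of_le (fun m => norm_nonneg _) (T_norm_le hε n z)
  simpa [div_eq_mul_inv, mul_assoc] using
    (Real.summable_pow_div_factorial ((|z| / 2) ^ 2)).mul_left ((|z| / 2) ^ n)

lemma summable_T {ε : ℝ} (hε : |ε| ≤ 1) (n : ℕ) (z : ℝ) : Summable (T ε n z) :=
  (summable_norm_T hε n z).of_norm

lemma hasSum_T {ε : ℝ} (hε : |ε| ≤ 1) (n : ℕ) (z : ℝ) : HasSum (T ε n z) (B ε n z) :=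
  (summable_T hε n z).hasSum


lemma besselI_eq (n : ℕ) (z : ℝ) : besselI n z = B 1 n z := by
  unfold besselI B T
  congr 1; funext m
  have h1 : (z / 2) ^ (2 * (m : ℝ) + (n : ℝ)) = (z / 2) ^ (2 * m + n) := by
    rw [show 2 * (m : ℝ) + (n : ℝ) = ((2 * m + n : ℕ) : ℝ) by push_cast; ring,
      Real.rpow_natCast]
  have h2 : Real.Gamma ((m : ℝ) + (n : ℝ) + 1) = ((m + n).factorial : ℝ) := by
    rw [show (m : ℝ) + (n : ℝ) + 1 = ((m + n : ℕ) : ℝ) + 1 by push_cast; ring,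
      Real.Gamma_nat_eq_factorial]
  rw [h1, h2, one_pow, one_mul]

lemma besselJ_eq (n : ℕ) (z : ℝ) : besselJ n z = B (-1) n z := by
  unfold besselJ B T
  congr 1; funext m
  have h1 : (z / 2) ^ (2 * (m : ℝ) + (n : ℝ)) = (z / 2) ^ (2 * m + n) := by
    rw [show 2 * (m : ℝ) + (n : ℝ) = ((2 * m + n : ℕ) : ℝ) by push_cast; ring,
      Real.rpow_natCast]
  have h2 : Real.Gamma ((m : ℝ) + (n : ℝ) + 1) = ((m + n).factorial : ℝ) := by
    rw [show (m : ℝ) + (n : ℝ) + 1 = ((m + n : ℕ) : ℝ) + 1 by push_cast; ring,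
      Real.Gamma_nat_eq_factorial]
  rw [h1, h2]; ring

lemma B_pos (n : ℕ) {z : ℝ} (hz : 0 < z) : 0 < B 1 n z := by
  have hs : Summable (T 1 n z) := summable_T (by norm_num) n z
  have h0 : 0 < T 1 n z 0 := by
    unfold T
    have : (0:ℝ) < (z / 2) ^ (2 * 0 + n) := by positivity
    positivity
  exact Summable.tsum_pos hs (fun m => by unfold T; positivity) 0 h0

lemma key_rec (ε : ℝ) (n : ℕ) (z : ℝ) (m : ℕ) :
    z * T ε n z (m + 1) - 2 * (n + 1) * T ε (n + 1) z (m + 1) = ε * (z * T ε (n + 2) z m) := by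
  unfold T
  have e1 : 2 * (m + 1) + n = 2 * m + (n + 2) := by ring
  have e2 : 2 * (m + 1) + (n + 1) = (2 * m + (n + 2)) + 1 := by ring
  rw [e1, e2]
  have hf1 : ((m + 1).factorial : ℝ) = (m + 1) * m.factorial := by
    rw [Nat.factorial_succ]; push_cast; ring
  have hf2 : ((m + 1 + n).factorial : ℝ) = (m + n + 1) * (m + n).factorial := by
    rw [show m + 1 + n = (m + n) + 1 by ring, Nat.factorial_succ]; push_cast; ring
  have hf3 : ((m + 1 + (n + 1)).factorial : ℝ) = (m + n + 2) * ((m + n + 1) * (m + n).factorial) := by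
    rw [show m + 1 + (n + 1) = (m + n + 1) + 1 by ring, Nat.factorial_succ, Nat.factorial_succ]
    push_cast; ring
  have hf4 : ((m + (n + 2)).factorial : ℝ) = (m + n + 2) * ((m + n + 1) * (m + n).factorial) := by
    rw [show m + (n + 2) = (m + n + 1) + 1 by ring, Nat.factorial_succ, Nat.factorial_succ]
    push_cast; ring
  rw [hf1, hf2, hf3, hf4]
  rw [pow_succ]
  have hmf : (m.factorial : ℝ) ≠ 0 := by exact_mod_cast m.factorial_pos.ne'
  have hnf : ((m + n).factorial : ℝ) ≠ 0 := by exact_mod_cast (m + n).factorial_pos.ne'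
  have h1 : (m : ℝ) + 1 ≠ 0 := by positivity
  have h2 : (m : ℝ) + n + 1 ≠ 0 := by positivity
  have h3 : (m : ℝ) + n + 2 ≠ 0 := by positivity
  field_simp
  ring

lemma T_zero_rec (ε : ℝ) (n : ℕ) (z : ℝ) :
    z * T ε n z 0 - 2 * (n + 1) * T ε (n + 1) z 0 = 0 := by
  unfold T
  simp only [Nat.zero_add, pow_zero, one_mul, Nat.factorial_zero, Nat.cast_one, Nat.mul_zero,
    Nat.add_zero, mul_zero, zero_add]
  rw [pow_succ, Nat.factorial_succ]
  have hnf : ((n).factorial : ℝ) ≠ 0 := by exact_mod_cast n.factorial_pos.ne'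
  have h1 : (n : ℝ) + 1 ≠ 0 := by positivity
  push_cast
  field_simp
  ring

set_option maxHeartbeats 1000000 in
lemma B_rec {ε : ℝ} (hε : |ε| ≤ 1) (n : ℕ) (z : ℝ) :
    z * B ε n z = ε * (z * B ε (n + 2) z) + 2 * (n + 1) * B ε (n + 1) z := by
  have h1 : HasSum (fun m => z * T ε n z m - 2 * (n + 1) * T ε (n + 1) z m)
      (z * B ε n z - 2 * (n + 1) * B ε (n + 1) z) :=
    ((hasSum_T hε n z).mul_left z).sub ((hasSum_T hε (n + 1) z).mul_left _)
  have h2 : HasSum (fun m => ε * (z * T ε (n + 2) z m)) (ε * (z * B ε (n + 2) z)) :=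
    ((hasSum_T hε (n + 2) z).mul_left z).mul_left ε
  have h3 : HasSum (fun m => z * T ε n z (m + 1) - 2 * (n + 1) * T ε (n + 1) z (m + 1))
      (ε * (z * B ε (n + 2) z)) := by
    refine HasSum.congr_fun h2 fun m => key_rec ε n z m
  have h4 := (hasSum_nat_add_iff
    (f := fun m => z * T ε n z m - 2 * (n + 1) * T ε (n + 1) z m) 1).mp h3
  rw [Finset.sum_range_one, T_zero_rec, add_zero] at h4
  have := h1.unique h4
  linarith


noncomputable def D (ε : ℝ) (n : ℕ) (x : ℝ) (m : ℕ) : ℝ :=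
  ε ^ m * (((2 * m + n : ℕ) : ℝ) * (x / 2) ^ (2 * m + n - 1) * (1 / 2) /
    ((m.factorial : ℝ) * ((m + n).factorial : ℝ)))

lemma hasDerivAt_T (ε : ℝ) (n : ℕ) (m : ℕ) (x : ℝ) :
    HasDerivAt (fun y => T ε n y m) (D ε n x m) x := by
  have h0 : HasDerivAt (fun y : ℝ => y / 2) (1 / 2) x := by
    simpa using (hasDerivAt_id x).div_const 2
  have h1 := (h0.pow (2 * m + n)).div_const ((m.factorial : ℝ) * ((m + n).factorial : ℝ))
  have h2 := h1.const_mul (ε ^ m)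
  exact h2

lemma summable_D_bound (n : ℕ) {R : ℝ} (hR : 0 < R) :
    Summable (fun m : ℕ => ((2 * m + n : ℕ) : ℝ) * (R / 2) ^ (2 * m + n - 1) * (1 / 2) /
      ((m.factorial : ℝ) * ((m + n).factorial : ℝ))) := by
  have ha : (0 : ℝ) < R / 2 := by linarith
  set C : ℝ := max (R / 2)⁻¹ 1 * R ^ n / 2 with hC
  have hCpos : 0 < C := by positivity
  have hmaj : Summable (fun m : ℕ => C * ((R ^ 2) ^ m / m.factorial)) :=
    (Real.summable_pow_div_factorial (R ^ 2)).mul_left C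
  refine Summable.of_nonneg_of_le (fun m => by positivity) (fun m => ?_) hmaj
  have hfac1 : (1 : ℝ) ≤ ((m + n).factorial : ℝ) := by exact_mod_cast (m + n).factorial_pos
  have hfacm : (0 : ℝ) < (m.factorial : ℝ) := by exact_mod_cast m.factorial_pos
  rcases Nat.eq_zero_or_pos (2 * m + n) with h | h
  · rw [h]
    simp only [Nat.cast_zero, zero_mul, zero_div]
    positivity
  · obtain ⟨p, hp⟩ : ∃ p, 2 * m + n = p + 1 := ⟨2 * m + n - 1, (Nat.succ_pred_eq_of_pos h).symm⟩
    have e : (R / 2) ^ (2 * m + n - 1) = (R / 2) ^ (2 * m + n) * (R / 2)⁻¹ := by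
      rw [hp, Nat.add_sub_cancel, pow_succ]
      field_simp
    have h1 : ((2 * m + n : ℕ) : ℝ) ≤ 2 ^ (2 * m + n) := by
      exact_mod_cast ((2 * m + n).lt_two_pow_self).le
    have step1 : ((2 * m + n : ℕ) : ℝ) * (R / 2) ^ (2 * m + n - 1) * (1 / 2) /
        ((m.factorial : ℝ) * ((m + n).factorial : ℝ))
        ≤ (2 : ℝ) ^ (2 * m + n) * ((R / 2) ^ (2 * m + n) * (R / 2)⁻¹) * (1 / 2) /
          ((m.factorial : ℝ) * 1) := by
      rw [e]
      gcongr
    refine step1.trans ?_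
    have e2 : (2 : ℝ) ^ (2 * m + n) * ((R / 2) ^ (2 * m + n) * (R / 2)⁻¹) * (1 / 2) /
        ((m.factorial : ℝ) * 1)
        = ((R / 2)⁻¹ * R ^ n / 2) * ((R ^ 2) ^ m / (m.factorial : ℝ)) := by
      rw [show (2 : ℝ) ^ (2 * m + n) * ((R / 2) ^ (2 * m + n) * (R / 2)⁻¹)
          = (2 * (R / 2)) ^ (2 * m + n) * (R / 2)⁻¹ by rw [mul_pow]; ring]
      rw [show (2 : ℝ) * (R / 2) = R by ring,
        show 2 * m + n = n + 2 * m by ring, pow_add, pow_mul]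
      ring
    rw [e2, hC]
    have hmax : (R / 2)⁻¹ ≤ max (R / 2)⁻¹ 1 := le_max_left _ _
    gcongr

lemma norm_D_le {ε : ℝ} (hε : |ε| ≤ 1) (n : ℕ) (m : ℕ) {y R : ℝ} (hy : |y| ≤ R) :
    ‖D ε n y m‖ ≤ ((2 * m + n : ℕ) : ℝ) * (R / 2) ^ (2 * m + n - 1) * (1 / 2) /
      ((m.factorial : ℝ) * ((m + n).factorial : ℝ)) := by
  have hR : 0 ≤ R := le_trans (abs_nonneg y) hy
  have hfacm : (0 : ℝ) < (m.factorial : ℝ) := by exact_mod_cast m.factorial_pos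
  have hfacn : (0 : ℝ) < ((m + n).factorial : ℝ) := by exact_mod_cast (m + n).factorial_pos
  have h1 : ‖D ε n y m‖ = |ε| ^ m * (((2 * m + n : ℕ) : ℝ) * (|y| / 2) ^ (2 * m + n - 1) * (1 / 2) /
      ((m.factorial : ℝ) * ((m + n).factorial : ℝ))) := by
    simp only [D, Real.norm_eq_abs, abs_mul, abs_div, abs_pow, Nat.abs_cast, abs_one, abs_two]
  rw [h1]
  have h2 : |ε| ^ m ≤ 1 := pow_le_one₀ (abs_nonneg _) hε
  have h4 : ((2 * m + n : ℕ) : ℝ) * (|y| / 2) ^ (2 * m + n - 1) * (1 / 2) /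
      ((m.factorial : ℝ) * ((m + n).factorial : ℝ))
      ≤ ((2 * m + n : ℕ) : ℝ) * (R / 2) ^ (2 * m + n - 1) * (1 / 2) /
      ((m.factorial : ℝ) * ((m + n).factorial : ℝ)) := by
    gcongr
  calc |ε| ^ m * (((2 * m + n : ℕ) : ℝ) * (|y| / 2) ^ (2 * m + n - 1) * (1 / 2) /
      ((m.factorial : ℝ) * ((m + n).factorial : ℝ)))
      ≤ 1 * (((2 * m + n : ℕ) : ℝ) * (R / 2) ^ (2 * m + n - 1) * (1 / 2) /
      ((m.factorial : ℝ) * ((m + n).factorial : ℝ))) :=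
        mul_le_mul h2 h4 (by positivity) one_pos.le
    _ = _ := one_mul _

lemma hasDerivAt_B_tsum {ε : ℝ} (hε : |ε| ≤ 1) (n : ℕ) (x : ℝ) :
    HasDerivAt (B ε n) (∑' m, D ε n x m) x := by
  set R : ℝ := |x| + 1 with hRdef
  have hR : 0 < R := by positivity
  have hx : x ∈ Ioo (-R) R := by
    constructor <;> [nlinarith [abs_nonneg x, neg_abs_le x]; nlinarith [le_abs_self x]]
  exact hasDerivAt_tsum_of_isPreconnected (summable_D_bound n hR)
    isOpen_Ioo (convex_Ioo (-R) R).isPreconnected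
    (fun m y _ => hasDerivAt_T ε n m y)
    (fun m y hy => norm_D_le hε n m (by
      rw [abs_le]
      exact ⟨by linarith [hy.1], hy.2.le⟩))
    hx ((hasSum_T hε n x).summable) hx


lemma summable_D {ε : ℝ} (hε : |ε| ≤ 1) (n : ℕ) (z : ℝ) : Summable (D ε n z) := by
  have hR : (0 : ℝ) < |z| + 1 := by positivity
  refine Summable.of_norm (Summable.of_nonneg_of_le (fun m => norm_nonneg _)
    (fun m => norm_D_le hε n m (by linarith [le_refl |z|] : |z| ≤ |z| + 1))
    (summable_D_bound n hR))

lemma key_D (ε : ℝ) (n : ℕ) {z : ℝ} (hz : z ≠ 0) (m : ℕ) :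
    D ε n z (m + 1) - n / z * T ε n z (m + 1) = ε * T ε (n + 1) z m := by
  unfold D T
  have e0 : 2 * (m + 1) + n - 1 = 2 * m + (n + 1) := by omega
  have e1 : 2 * (m + 1) + n = (2 * m + (n + 1)) + 1 := by ring
  rw [e0, e1, pow_succ]
  have hf1 : ((m + 1).factorial : ℝ) = (m + 1) * m.factorial := by
    rw [Nat.factorial_succ]; push_cast; ring
  have hf2 : ((m + 1 + n).factorial : ℝ) = ((m + (n + 1)).factorial : ℝ) := by
    rw [show m + 1 + n = m + (n + 1) by ring]
  rw [hf1, hf2]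
  push_cast
  have hmf : (m.factorial : ℝ) ≠ 0 := by exact_mod_cast m.factorial_pos.ne'
  have hnf : ((m + (n + 1)).factorial : ℝ) ≠ 0 := by exact_mod_cast (m + (n + 1)).factorial_pos.ne'
  have h1 : (m : ℝ) + 1 ≠ 0 := by positivity
  field_simp
  ring

lemma zero_D (ε : ℝ) (n : ℕ) {z : ℝ} (hz : z ≠ 0) :
    D ε n z 0 - n / z * T ε n z 0 = 0 := by
  unfold D T
  rcases n with _ | s
  · norm_num
  · have e0 : 2 * 0 + (s + 1) - 1 = s := by omega
    have e1 : 2 * 0 + (s + 1) = s + 1 := by ring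
    rw [e0, e1, pow_succ]
    have hnf : ((0 + (s + 1)).factorial : ℝ) ≠ 0 := by
      exact_mod_cast (0 + (s + 1)).factorial_pos.ne'
    have h1 : ((s : ℝ) + 1) ≠ 0 := by positivity
    simp only [pow_zero, one_mul, Nat.factorial_zero, Nat.cast_one]
    push_cast
    field_simp
    ring

lemma tsum_D_eq {ε : ℝ} (hε : |ε| ≤ 1) (n : ℕ) {z : ℝ} (hz : z ≠ 0) :
    ∑' m, D ε n z m = ε * B ε (n + 1) z + n * B ε n z / z := by
  have h1 : HasSum (fun m => D ε n z m - n / z * T ε n z m)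
      ((∑' m, D ε n z m) - n / z * B ε n z) :=
    (summable_D hε n z).hasSum.sub ((hasSum_T hε n z).mul_left _)
  have h2 : HasSum (fun m => ε * T ε (n + 1) z m) (ε * B ε (n + 1) z) :=
    (hasSum_T hε (n + 1) z).mul_left ε
  have h3 : HasSum (fun m => D ε n z (m + 1) - n / z * T ε n z (m + 1)) (ε * B ε (n + 1) z) :=
    HasSum.congr_fun h2 fun m => key_D ε n hz m
  have h4 := (hasSum_nat_add_iff
    (f := fun m => D ε n z m - n / z * T ε n z m) 1).mp h3
  rw [Finset.sum_range_one, zero_D ε n hz, add_zero] at h4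
  have h5 := h1.unique h4
  have : (n : ℝ) / z * B ε n z = n * B ε n z / z := by ring
  linarith [this ▸ h5]

lemma hasDerivAt_B {ε : ℝ} (hε : |ε| ≤ 1) (n : ℕ) {z : ℝ} (hz : z ≠ 0) :
    HasDerivAt (B ε n) (ε * B ε (n + 1) z + n * B ε n z / z) z := by
  rw [← tsum_D_eq hε n hz]
  exact hasDerivAt_B_tsum hε n z


/-- closed form of the Cauchy-product diagonal terms -/
noncomputable def E (a b N : ℕ) (z : ℝ) : ℝ :=
  (z / 2) ^ (2 * N + (a + b)) * (((a + b + 2 * N).factorial : ℝ) /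
    ((N.factorial : ℝ) * ((a + N).factorial : ℝ) * ((b + N).factorial : ℝ) *
      ((a + b + N).factorial : ℝ)))

lemma inner_sum (a b N : ℕ) (z : ℝ) :
    ∑ kl ∈ Finset.HasAntidiagonal.antidiagonal N, T 1 a z kl.1 * T 1 b z kl.2 = E a b N z := by
  have key : ∀ kl ∈ Finset.HasAntidiagonal.antidiagonal N, T 1 a z kl.1 * T 1 b z kl.2
      = ((z / 2) ^ (2 * N + (a + b)) / (((a + N).factorial : ℝ) * ((b + N).factorial : ℝ))) *
        ((((b + N).choose kl.1 : ℕ) : ℝ) * (((a + N).choose kl.2 : ℕ) : ℝ)) := by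
    rintro ⟨i, j⟩ hij
    rw [Finset.HasAntidiagonal.mem_antidiagonal] at hij
    unfold T
    simp only [one_pow, one_mul]
    have hiN : i ≤ b + N := by omega
    have hjN : j ≤ a + N := by omega
    rw [Nat.cast_choose ℝ hiN, Nat.cast_choose ℝ hjN,
      show b + N - i = b + j by omega, show a + N - j = a + i by omega,
      div_mul_div_comm, ← pow_add, show 2 * i + a + (2 * j + b) = 2 * N + (a + b) by omega,
      show i + a = a + i from Nat.add_comm i a, show j + b = b + j from Nat.add_comm j b]
    have h1 : ((i.factorial : ℝ)) ≠ 0 := by exact_mod_cast i.factorial_pos.ne'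
    have h2 : ((j.factorial : ℝ)) ≠ 0 := by exact_mod_cast j.factorial_pos.ne'
    have h3 : (((a + i).factorial : ℝ)) ≠ 0 := by exact_mod_cast (a + i).factorial_pos.ne'
    have h4 : (((b + j).factorial : ℝ)) ≠ 0 := by exact_mod_cast (b + j).factorial_pos.ne'
    have h5 : (((a + N).factorial : ℝ)) ≠ 0 := by exact_mod_cast (a + N).factorial_pos.ne'
    have h6 : (((b + N).factorial : ℝ)) ≠ 0 := by exact_mod_cast (b + N).factorial_pos.ne'
    field_simp
  rw [Finset.sum_congr rfl key, ← Finset.mul_sum]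
  have hsum : ∑ kl ∈ Finset.HasAntidiagonal.antidiagonal N,
      ((((b + N).choose kl.1 : ℕ) : ℝ) * (((a + N).choose kl.2 : ℕ) : ℝ))
      = (((a + b + 2 * N).choose N : ℕ) : ℝ) := by
    rw [show a + b + 2 * N = b + N + (a + N) by omega, Nat.add_choose_eq]
    push_cast
    rfl
  rw [hsum, Nat.cast_choose ℝ (by omega : N ≤ a + b + 2 * N),
    show a + b + 2 * N - N = a + b + N by omega]
  unfold E
  have h5 : (((a + N).factorial : ℝ)) ≠ 0 := by exact_mod_cast (a + N).factorial_pos.ne'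
  have h6 : (((b + N).factorial : ℝ)) ≠ 0 := by exact_mod_cast (b + N).factorial_pos.ne'
  have h7 : ((N.factorial : ℝ)) ≠ 0 := by exact_mod_cast N.factorial_pos.ne'
  have h8 : (((a + b + N).factorial : ℝ)) ≠ 0 := by exact_mod_cast (a + b + N).factorial_pos.ne'
  field_simp

lemma prod_repr (a b : ℕ) (z : ℝ) :
    B 1 a z * B 1 b z = ∑' N, E a b N z := by
  rw [B, B, tsum_mul_tsum_eq_tsum_sum_antidiagonal_of_summable_norm
    (summable_norm_T (by norm_num) a z) (summable_norm_T (by norm_num) b z)]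
  exact tsum_congr fun N => inner_sum a b N z

lemma summable_E (a b : ℕ) (z : ℝ) : Summable (fun N => E a b N z) := by
  have h := (summable_norm_sum_mul_antidiagonal_of_summable_norm
    (summable_norm_T (by norm_num : |(1:ℝ)| ≤ 1) a z)
    (summable_norm_T (by norm_num : |(1:ℝ)| ≤ 1) b z)).of_norm
  exact (summable_congr fun N => inner_sum a b N z).mp h

lemma turan (n : ℕ) {z : ℝ} (hz : 0 < z) :
    B 1 n z * B 1 (n + 2) z < B 1 (n + 1) z ^ 2 := by
  rw [sq, prod_repr n (n + 2) z, prod_repr (n + 1) (n + 1) z]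
  have key : ∀ N, E n (n + 2) N z < E (n + 1) (n + 1) N z := by
    intro N
    unfold E
    rw [show n + (n + 2) = n + 1 + (n + 1) by omega]
    have hpow : (0 : ℝ) < (z / 2) ^ (2 * N + (n + 1 + (n + 1))) := by positivity
    apply mul_lt_mul_of_pos_left _ hpow
    apply div_lt_div_of_pos_left
    · exact_mod_cast (n + 1 + (n + 1) + 2 * N).factorial_pos
    · have h1 : (0:ℝ) < ((n + 1 + N).factorial : ℝ) := by exact_mod_cast (n+1+N).factorial_pos
      have h2 : (0:ℝ) < (N.factorial : ℝ) := by exact_mod_cast N.factorial_pos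
      have h3 : (0:ℝ) < ((n + 1 + (n + 1) + N).factorial : ℝ) := by
        exact_mod_cast (n + 1 + (n + 1) + N).factorial_pos
      positivity
    · -- N! * (n+N)! * (n+2+N)! * (..)!  >  N! * (n+1+N)! * (n+1+N)! * (..)!
      have f1 : ((n + 1 + N).factorial : ℝ) = (n + 1 + N) * ((n + N).factorial : ℝ) := by
        rw [show n + 1 + N = (n + N) + 1 by omega, Nat.factorial_succ]; push_cast; ring
      have f2 : ((n + 2 + N).factorial : ℝ) = (n + 2 + N) * ((n + 1 + N).factorial : ℝ) := by
        rw [show n + 2 + N = (n + 1 + N) + 1 by omega, Nat.factorial_succ]; push_cast; ring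
      have h1 : (0:ℝ) < ((n + N).factorial : ℝ) := by exact_mod_cast (n+N).factorial_pos
      have h1' : (0:ℝ) < ((n + 1 + N).factorial : ℝ) := by exact_mod_cast (n+1+N).factorial_pos
      have h2 : (0:ℝ) < (N.factorial : ℝ) := by exact_mod_cast N.factorial_pos
      have h3 : (0:ℝ) < ((n + 1 + (n + 1) + N).factorial : ℝ) := by
        exact_mod_cast (n + 1 + (n + 1) + N).factorial_pos
      rw [f2, f1]
      nlinarith [mul_pos h2 (mul_pos h1 h1'), mul_pos (mul_pos h2 (mul_pos h1 h1')) h3]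
  exact Summable.tsum_lt_tsum_of_nonneg (i := 0)
    (fun N => by unfold E; positivity)
    (fun N => (key N).le) (key 0) (summable_E (n + 1) (n + 1) z)


lemma quad (n : ℕ) {z : ℝ} (hz : 0 < z) :
    0 < z * B 1 (n + 1) z ^ 2 + 2 * (n + 1) * B 1 (n + 1) z * B 1 n z - z * B 1 n z ^ 2 := by
  have hrec := B_rec (by norm_num : |(1:ℝ)| ≤ 1) n z
  have ht := mul_lt_mul_of_pos_left (turan n hz) hz
  have e2 : B 1 n z * (z * B 1 (n + 2) z)
      = B 1 n z * (z * B 1 n z - 2 * (n + 1) * B 1 (n + 1) z) := by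
    have : z * B 1 (n + 2) z = z * B 1 n z - 2 * (n + 1) * B 1 (n + 1) z := by linarith
    rw [this]
  nlinarith [e2, ht]

lemma ratio_lt_one (n : ℕ) {z : ℝ} (hz : 0 < z) : B 1 (n + 1) z < B 1 n z := by
  by_contra hcon
  push_neg at hcon
  have hP0 := B_pos n hz
  have hP1 := B_pos (n + 1) hz
  have hP2 := B_pos (n + 2) hz
  have hrec := B_rec (by norm_num : |(1:ℝ)| ≤ 1) n z
  have hq := quad (n + 1) hz
  -- z * B(n+2) ≤ (z - 2(n+1)) * B(n+1)
  have h1 : z * B 1 (n + 2) z ≤ (z - 2 * (n + 1)) * B 1 (n + 1) z := by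
    nlinarith [hrec, hcon, hz]
  have h2 : 0 < z * B 1 (n + 2) z := mul_pos hz hP2
  have hq2 : 0 < z ^ 2 * (z * B 1 (n + 2) z ^ 2
      + 2 * (n + 1 + 1) * B 1 (n + 2) z * B 1 (n + 1) z - z * B 1 (n + 1) z ^ 2) := by
    have := mul_pos (pow_pos hz 2) hq
    refine lt_of_lt_of_eq this ?_
    push_cast
    ring
  have hn : (0:ℝ) ≤ (n : ℝ) := Nat.cast_nonneg n
  have hcQ : (0:ℝ) ≤ (z - 2 * (n + 1)) * B 1 (n + 1) z := le_trans h2.le h1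
  have A := mul_le_mul_of_nonneg_left (mul_le_mul h1 h1 h2.le hcQ) hz.le
  have Bv := mul_le_mul_of_nonneg_left
    (mul_le_mul_of_nonneg_right h1 hP1.le) hz.le
  have BvN := mul_le_mul_of_nonneg_left Bv hn
  nlinarith [hq2, A, Bv, BvN, mul_pos (mul_pos hz hP1) hP1,
    mul_nonneg (mul_nonneg (mul_nonneg hn hz.le) hP1.le) hP1.le,
    mul_nonneg (mul_nonneg (mul_nonneg (mul_nonneg hn hz.le) hz.le) hP1.le) hP1.le]



lemma besselI_eq' (k : ℕ) (x : ℝ) : besselI ((k : ℝ) + 1) x = B 1 (k + 1) x := by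
  rw [show ((k : ℝ) + 1) = ((k + 1 : ℕ) : ℝ) by push_cast; ring, besselI_eq]

lemma besselJ_eq' (k : ℕ) (x : ℝ) : besselJ ((k : ℝ) + 1) x = B (-1) (k + 1) x := by
  rw [show ((k : ℝ) + 1) = ((k + 1 : ℕ) : ℝ) by push_cast; ring, besselJ_eq]

end BesselAux

open BesselAux in
set_option maxHeartbeats 1000000 in
/-- At any root `α* > 2` of `F̃_k`, the derivative equals
`(2κ²/(α*)³)·(u² + 2ku/z + (α*)²/(2z²) − 1/2)` with `z = κ/α*`, `u = I_{k+1}(z)/I_k(z)`,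
and this quantity is strictly positive; in particular such roots are simple. -/
theorem stmt10 (κ : ℝ) (hκ : 0 < κ) (k : ℕ) (αs : ℝ) (hαs : 2 < αs)
    (hroot : Ftilde κ k αs = 0) :
    deriv (Ftilde κ k) αs
        = (2 * κ ^ 2 / αs ^ 3) *
            ((besselI (k + 1) (κ / αs) / besselI k (κ / αs)) ^ 2
              + 2 * k * (besselI (k + 1) (κ / αs) / besselI k (κ / αs)) / (κ / αs)
              + αs ^ 2 / (2 * (κ / αs) ^ 2) - 1 / 2) ∧
      0 < deriv (Ftilde κ k) αs := by
  have hαpos : (0 : ℝ) < αs := by linarith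
  have hα0 : αs ≠ 0 := ne_of_gt hαpos
  have hzpos : 0 < κ / αs := div_pos hκ hαpos
  have hz0 : κ / αs ≠ 0 := ne_of_gt hzpos
  have hε1 : |(1 : ℝ)| ≤ 1 := by norm_num
  have hεm : |(-1 : ℝ)| ≤ 1 := by norm_num
  have hFt : Ftilde κ k = fun α : ℝ =>
      (κ / α) * B 1 (k + 1) (κ / α) / B 1 k (κ / α)
        + α * B (-1) (k + 1) α / B (-1) k α := by
    funext α
    unfold Ftilde
    rw [besselI_eq' k, besselI_eq k, besselJ_eq' k, besselJ_eq k]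
  have hP0 : 0 < B 1 k (κ / αs) := B_pos k hzpos
  have hP1 : 0 < B 1 (k + 1) (κ / αs) := B_pos (k + 1) hzpos
  have hroot' : (κ / αs) * B 1 (k + 1) (κ / αs) / B 1 k (κ / αs)
      + αs * B (-1) (k + 1) αs / B (-1) k αs = 0 := by
    rw [hFt] at hroot
    simpa using hroot
  have hQ0 : B (-1) k αs ≠ 0 := by
    intro h0
    rw [h0, div_zero, add_zero] at hroot'
    have hgt : 0 < (κ / αs) * B 1 (k + 1) (κ / αs) / B 1 k (κ / αs) := by positivity
    linarith
  have d1 : HasDerivAt (fun α : ℝ => κ / α) (-(κ / αs ^ 2)) αs := by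
    have h := (hasDerivAt_inv hα0).const_mul κ
    simp only [div_eq_mul_inv]
    exact h.congr_deriv (by ring)
  have hIdk1 := hasDerivAt_B hε1 (k + 1) hz0
  have hIdk := hasDerivAt_B hε1 k hz0
  have hJdk1 := hasDerivAt_B hεm (k + 1) hα0
  have hJdk := hasDerivAt_B hεm k hα0
  have hA : HasDerivAt (fun α : ℝ => B 1 (k + 1) (κ / α))
      ((1 * B 1 (k + 1 + 1) (κ / αs) + ↑(k + 1) * B 1 (k + 1) (κ / αs) / (κ / αs))
        * -(κ / αs ^ 2)) αs := hIdk1.comp αs d1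
  have hBd : HasDerivAt (fun α : ℝ => B 1 k (κ / α))
      ((1 * B 1 (k + 1) (κ / αs) + ↑k * B 1 k (κ / αs) / (κ / αs)) * -(κ / αs ^ 2)) αs :=
    hIdk.comp αs d1
  have hnum1 := d1.mul hA
  have hfrac1 := hnum1.div hBd (ne_of_gt hP0)
  have hnum2 := (hasDerivAt_id' αs).mul hJdk1
  have hfrac2 := hnum2.div hJdk hQ0
  have htot := hfrac1.add hfrac2
  have hderiv := htot.deriv
  rw [show ((((fun α : ℝ => κ / α) * fun α => B 1 (k + 1) (κ / α)) / fun α => B 1 k (κ / α))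
      + (fun x => x) * B (-1) (k + 1) / B (-1) k) = Ftilde κ k from hFt.symm] at hderiv
  simp only [Pi.mul_apply] at hderiv
  rw [besselI_eq' k, besselI_eq k]
  have recP := B_rec hε1 k (κ / αs)
  have recQ := B_rec hεm k αs
  have h1 : κ * B 1 (k + 1) (κ / αs) * B (-1) k αs
      + αs ^ 2 * B (-1) (k + 1) αs * B 1 k (κ / αs) = 0 := by
    have h := hroot'
    field_simp at h
    linarith
  have eP2 : B 1 (k + 2) (κ / αs)
      = B 1 k (κ / αs) - 2 * ((k : ℝ) + 1) * B 1 (k + 1) (κ / αs) / (κ / αs) := by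
    have hr := recP
    field_simp at hr ⊢
    linarith
  have eQ2 : B (-1) (k + 2) αs
      = -B (-1) k αs + 2 * ((k : ℝ) + 1) * B (-1) (k + 1) αs / αs := by
    have hr := recQ
    field_simp at hr ⊢
    linarith
  have eQ1 : B (-1) (k + 1) αs
      = -(κ * B 1 (k + 1) (κ / αs) * B (-1) k αs) / (αs ^ 2 * B 1 k (κ / αs)) := by
    field_simp
    linarith
  have heq : deriv (Ftilde κ k) αs
      = (2 * κ ^ 2 / αs ^ 3) *
          ((B 1 (k + 1) (κ / αs) / B 1 k (κ / αs)) ^ 2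
            + 2 * k * (B 1 (k + 1) (κ / αs) / B 1 k (κ / αs)) / (κ / αs)
            + αs ^ 2 / (2 * (κ / αs) ^ 2) - 1 / 2) := by
    rw [hderiv]
    push_cast
    rw [show k + 1 + 1 = k + 2 by omega]
    rw [eQ2, eQ1, eP2]
    field_simp
    ring
  refine ⟨heq, ?_⟩
  rw [heq]
  have hu1 : B 1 (k + 1) (κ / αs) / B 1 k (κ / αs) < 1 :=
    (div_lt_one hP0).mpr (ratio_lt_one k hzpos)
  have hupos : 0 < B 1 (k + 1) (κ / αs) / B 1 k (κ / αs) := div_pos hP1 hP0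
  have hq := quad k hzpos
  have huq : 0 < (κ / αs) * (B 1 (k + 1) (κ / αs) / B 1 k (κ / αs)) ^ 2
      + 2 * ((k : ℝ) + 1) * (B 1 (k + 1) (κ / αs) / B 1 k (κ / αs)) - κ / αs := by
    have e : (κ / αs) * (B 1 (k + 1) (κ / αs) / B 1 k (κ / αs)) ^ 2
        + 2 * ((k : ℝ) + 1) * (B 1 (k + 1) (κ / αs) / B 1 k (κ / αs)) - κ / αs
        = ((κ / αs) * B 1 (k + 1) (κ / αs) ^ 2
            + 2 * ((k : ℝ) + 1) * B 1 (k + 1) (κ / αs) * B 1 k (κ / αs)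
            - (κ / αs) * B 1 k (κ / αs) ^ 2) / B 1 k (κ / αs) ^ 2 := by
      field_simp
    rw [e]
    exact div_pos hq (pow_pos hP0 2)
  set u : ℝ := B 1 (k + 1) (κ / αs) / B 1 k (κ / αs) with hu
  apply mul_pos (by positivity)
  have e2 : u ^ 2 + 2 * (k : ℝ) * u / (κ / αs) + αs ^ 2 / (2 * (κ / αs) ^ 2) - 1 / 2
      = (2 * (κ / αs) ^ 2 * u ^ 2 + 4 * (k : ℝ) * (κ / αs) * u + αs ^ 2 - (κ / αs) ^ 2)
        / (2 * (κ / αs) ^ 2) := by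
    field_simp
    ring
  rw [e2]
  apply div_pos _ (by positivity)
  nlinarith [mul_pos hzpos huq, mul_pos hzpos (sub_pos.mpr hu1),
    sq_nonneg (κ / αs - 2), hαs, hzpos, mul_pos hzpos hzpos]
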